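/- Let a < b be real numbers and α₁, α₂, β₁, β₂ ∈ ℝ with α₁ ≠ β₁ (problem data). Consider the Hahn symmetric variational functional L[y] = ∫_a^b ((D̃_{q,ω}[y](t))² + q·y(σ(t)) + t·D̃_{q,ω}[y](t)) d̃_{q,ω}t over y with y(a) = α, y(b) = β. Then the affine function y(t) = ((α−β)/(a−b))·t + (aβ−bα)/(a−b) is a global minimizer of L among admissible functions, since for any admissible y the difference L[y] − L[ȳ] with ȳ = y − (ct+d), c = (α−β)/(a−b), d = (aβ−bα)/(a−b), equals ∫_a^b (D̃_{q,ω}[ȳ](t))² d̃_{q,ω}t ≥ 0 up to exact terms vanishing at the endpoints. -/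

import Mathlib

/-- Hahn symmetric derivative: `(y(σ(t)) − y(σ⁻¹(t)))/(σ(t) − σ⁻¹(t))` for `t ≠ ω₀`,
where `σ(t) = qt + ω` and `σ⁻¹(t) = q⁻¹(t − ω)`; the ordinary derivative at `ω₀`. -/
noncomputable def hsD (q ω : ℝ) (y : ℝ → ℝ) (t : ℝ) : ℝ :=
  if t = ω / (1 - q) then deriv y t
  else (y (q * t + ω) - y (q⁻¹ * (t - ω))) / ((q * t + ω) - q⁻¹ * (t - ω))

/-- Hahn symmetric integral from `ω₀` to `x`:
`(σ⁻¹(x) − σ(x))·∑_{n≥0} q^{2n+1} g(σ^{2n+1}(x))`. -/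
noncomputable def hsInt (q ω : ℝ) (g : ℝ → ℝ) (x : ℝ) : ℝ :=
  (q⁻¹ * (x - ω) - (q * x + ω)) * ∑' n : ℕ, q ^ (2 * n + 1) * g ((fun s => q * s + ω)^[2 * n + 1] x)

/-- The `q,ω`-interval determined by `a` and `b`: `{σ^{2n+1}(a)} ∪ {σ^{2n+1}(b)} ∪ {ω₀}`. -/
def hsPts (q ω a b : ℝ) : Set ℝ :=
  {ω / (1 - q)} ∪ ⋃ n : ℕ, {(fun s => q * s + ω)^[2 * n + 1] a, (fun s => q * s + ω)^[2 * n + 1] b}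

/-- Admissible function for the Hahn symmetric variational problem: satisfies the boundary
conditions, `y` and `D̃_{q,ω}[y]` are bounded on the `q,ω`-interval and continuous at `ω₀`. -/
def hsAdmissible (q ω a b A B : ℝ) (y : ℝ → ℝ) : Prop :=
  y a = A ∧ y b = B ∧
  (∃ M : ℝ, ∀ t ∈ hsPts q ω a b, |y t| ≤ M ∧ |hsD q ω y t| ≤ M) ∧
  ContinuousAt y (ω / (1 - q)) ∧ ContinuousAt (hsD q ω y) (ω / (1 - q))

/-- Integrand `(D̃_{q,ω}[y](t))² + q·y(σ(t)) + t·D̃_{q,ω}[y](t)`. -/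
noncomputable def hsLag (q ω : ℝ) (y : ℝ → ℝ) (t : ℝ) : ℝ :=
  (hsD q ω y t) ^ 2 + q * y (q * t + ω) + t * hsD q ω y t

/-- The variational functional `L[y] = ∫_a^b hsLag(y) d̃_{q,ω}t`. -/
noncomputable def hsFunc (q ω a b : ℝ) (y : ℝ → ℝ) : ℝ :=
  hsInt q ω (hsLag q ω y) b - hsInt q ω (hsLag q ω y) a

/-- The affine function `y(t) = ((A−B)/(a−b))t + (aB−bA)/(a−b)` is an admissible global
minimizer of the Hahn symmetric variational functional
`L[y] = ∫_a^b ((D̃_{q,ω}[y])² + q·y∘σ + t·D̃_{q,ω}[y]) d̃_{q,ω}t` subject to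
`y(a) = A`, `y(b) = B`, where `a = ω₀ < b`. -/
lemma hs_iter (q ω : ℝ) (hq1 : q ≠ 1) (k : ℕ) (x : ℝ) :
    (fun s => q * s + ω)^[k] x = q ^ k * (x - ω / (1 - q)) + ω / (1 - q) := by
  induction k with
  | zero => simp
  | succ n ih =>
    rw [Function.iterate_succ_apply', ih]
    have h1 : (1 : ℝ) - q ≠ 0 := by intro h; apply hq1; linarith
    field_simp
    ring

lemma hsInt_base (q ω : ℝ) (hq0 : q ≠ 0) (hq1 : q ≠ 1) (g : ℝ → ℝ) :
    hsInt q ω g (ω / (1 - q)) = 0 := by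
  have h1 : (1 : ℝ) - q ≠ 0 := by intro h; apply hq1; linarith
  have : q⁻¹ * (ω / (1 - q) - ω) - (q * (ω / (1 - q)) + ω) = 0 := by
    field_simp
    ring
  rw [hsInt, this, zero_mul]

lemma hsD_affine (q ω : ℝ) (hq0 : 0 < q) (hq1 : q < 1) (c d t : ℝ) :
    hsD q ω (fun s => c * s + d) t = c := by
  rw [hsD]
  split_ifs with ht
  · have : HasDerivAt (fun s => c * s + d) c t := by
      simpa using ((hasDerivAt_id t).const_mul c).add_const d
    exact this.deriv
  · have hq0' : q ≠ 0 := ne_of_gt hq0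
    have h1 : (1 : ℝ) - q ≠ 0 := by intro h; linarith
    have hden : (q * t + ω) - q⁻¹ * (t - ω) ≠ 0 := by
      intro h0
      apply ht
      field_simp at h0 ⊢
      nlinarith [h0]
    have hnum : (c * (q * t + ω) + d) - (c * (q⁻¹ * (t - ω)) + d)
        = c * ((q * t + ω) - q⁻¹ * (t - ω)) := by ring
    rw [hnum, mul_div_assoc, div_self hden, mul_one]

lemma hsD_pt (q ω : ℝ) (hq0 : 0 < q) (hq1 : q < 1) (h : ℝ) (hh : 0 < h)
    (y : ℝ → ℝ) (n : ℕ) :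
    hsD q ω y (q ^ (2*n+1) * h + ω / (1 - q)) =
      (y (q ^ (2*n) * h + ω / (1 - q)) - y (q ^ (2*n+2) * h + ω / (1 - q)))
        / (q ^ (2*n) * (1 - q^2) * h) := by
  have hq0' : q ≠ 0 := ne_of_gt hq0
  have h1 : (1 : ℝ) - q ≠ 0 := by intro h'; linarith
  have ht : q ^ (2*n+1) * h + ω / (1 - q) ≠ ω / (1 - q) := by
    have : 0 < q ^ (2*n+1) * h := by positivity
    intro h'
    nlinarith [h']
  rw [hsD, if_neg ht]
  have e1 : q * (q ^ (2*n+1) * h + ω / (1 - q)) + ω = q ^ (2*n+2) * h + ω / (1 - q) := by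
    field_simp
    ring
  have e2 : q⁻¹ * ((q ^ (2*n+1) * h + ω / (1 - q)) - ω) = q ^ (2*n) * h + ω / (1 - q) := by
    field_simp
    ring
  rw [e1, e2]
  have d1 : q ^ (2*n+2) * h + ω / (1 - q) - (q ^ (2*n) * h + ω / (1 - q)) ≠ 0 := by
    have h2 : q ^ (2*n+2) < q ^ (2*n) := by
      apply pow_lt_pow_right_of_lt_one₀ hq0 hq1 (by omega)
    intro h'
    nlinarith [h']
  have d2 : q ^ (2*n) * (1 - q^2) * h ≠ 0 := by
    have : 0 < 1 - q ^ 2 := by nlinarith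
    positivity
  rw [div_eq_div_iff d1 d2]
  ring

lemma hsInt_pt (q ω b : ℝ) (hq0 : 0 < q) (hq1 : q < 1) (g : ℝ → ℝ) :
    hsInt q ω g b = ((q⁻¹ - q) * (b - ω / (1 - q))) *
      ∑' n : ℕ, q ^ (2*n+1) * g (q ^ (2*n+1) * (b - ω / (1 - q)) + ω / (1 - q)) := by
  have hq0' : q ≠ 0 := ne_of_gt hq0
  have h1 : (1 : ℝ) - q ≠ 0 := by intro h'; linarith
  rw [hsInt]
  congr 1
  · field_simp
    ring
  · exact tsum_congr fun n => by rw [hs_iter q ω (by linarith) (2*n+1) b]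

open Filter Finset

lemma hs_core (q h a c : ℝ) (hq0 : 0 < q) (hq1 : q < 1) (hh : 0 < h) (ha0 : 0 ≤ a)
    (s sb D : ℕ → ℝ)
    (hrec : ∀ n, s n - s (n + 1) = D n * (q ^ (2*n) * (1 - q ^ 2) * h))
    (hrecb : ∀ n, sb n - sb (n + 1) = c * (q ^ (2*n) * (1 - q ^ 2) * h))
    (hs0 : s 0 = sb 0)
    (hlim : Tendsto (fun n => s n - sb n) atTop (nhds 0))
    (M : ℝ) (hMD : ∀ n, |D n| ≤ M) (hM0 : 0 ≤ M) (hB0 : |s 0| ≤ M) (hcM : |c| ≤ M) :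
    ∑' n : ℕ, q ^ (2*n+1) * (c ^ 2 + q * sb (n+1) + (q ^ (2*n+1) * h + a) * c)
      ≤ ∑' n : ℕ, q ^ (2*n+1) * (D n ^ 2 + q * s (n+1) + (q ^ (2*n+1) * h + a) * D n) := by
  have hq2 : q ^ 2 < 1 := by nlinarith
  have h1q2 : (0:ℝ) < 1 - q ^ 2 := by linarith
  have h1q2' : (1:ℝ) - q ^ 2 ≠ 0 := ne_of_gt h1q2
  have hhne : h ≠ 0 := ne_of_gt hh
  -- uniform bound on the sequences
  have bound_aux : ∀ (z Dz : ℕ → ℝ), (∀ n, z n - z (n + 1) = Dz n * (q ^ (2*n) * (1 - q ^ 2) * h)) →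
      (∀ n, |Dz n| ≤ M) → |z 0| ≤ M → ∀ n, |z n| ≤ M + M * h := by
    intro z Dz hz hDz hz0
    have key : ∀ n, |z n| ≤ |z 0| + M * h * (1 - q ^ (2*n)) := by
      intro n
      induction n with
      | zero => simp
      | succ n ih =>
        have hpos : (0:ℝ) < q ^ (2*n) * (1 - q ^ 2) * h := by positivity
        have hz1 : z (n+1) = z n - Dz n * (q ^ (2*n) * (1 - q ^ 2) * h) := by
          have := hz n; linarith
        have habs : |z (n+1)| ≤ |z n| + M * (q ^ (2*n) * (1 - q ^ 2) * h) := by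
          rw [hz1, sub_eq_add_neg]
          refine (abs_add_le _ _).trans ?_
          rw [abs_neg, abs_mul, abs_of_pos hpos]
          have := mul_le_mul_of_nonneg_right (hDz n) hpos.le
          linarith
        have hexp : q ^ (2*(n+1)) = q ^ (2*n) * q ^ 2 := by
          ring
        rw [hexp]
        nlinarith [habs, ih]
    intro n
    have h1 := key n
    have h2 : (0:ℝ) ≤ q ^ (2*n) := by positivity
    nlinarith [mul_nonneg hM0 hh.le]
  have hsB : ∀ n, |s n| ≤ M + M * h := bound_aux s D hrec hMD hB0
  have hsbB : ∀ n, |sb n| ≤ M + M * h := bound_aux sb (fun _ => c) hrecb (fun _ => hcM) (by rw [← hs0]; exact hB0)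
  -- summability helper
  have hgeo : Summable (fun n : ℕ => ((q ^ 2) ^ n : ℝ)) :=
    summable_geometric_of_lt_one (by positivity) hq2
  have sum_aux : ∀ (f : ℕ → ℝ) (C : ℝ), (∀ n, |f n| ≤ C) →
      Summable (fun n => q ^ (2*n+1) * f n) := by
    intro f C hf
    apply Summable.of_norm_bounded (g := fun n => (q * C) * (q ^ 2) ^ n) (hgeo.mul_left _)
    intro n
    have hppos : (0:ℝ) < q ^ (2*n+1) := by positivity
    have h1 : ‖q ^ (2*n+1) * f n‖ = q ^ (2*n+1) * |f n| := by
      rw [Real.norm_eq_abs, abs_mul, abs_of_pos hppos]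
    rw [h1]
    have h2 : q ^ (2*n+1) = q * (q ^ 2) ^ n := by
      rw [← pow_mul, pow_add, pow_one]; ring
    have h3 : q ^ (2*n+1) * |f n| ≤ q ^ (2*n+1) * C :=
      mul_le_mul_of_nonneg_left (hf n) hppos.le
    rw [h2] at h3 ⊢
    calc q * (q ^ 2) ^ n * |f n| ≤ q * (q ^ 2) ^ n * C := h3
      _ = q * C * (q ^ 2) ^ n := by ring
  -- summability of the three series
  have htb : ∀ n : ℕ, |q ^ (2*n+1) * h + a| ≤ h + a := by
    intro n
    have h1 : (0:ℝ) < q ^ (2*n+1) * h := by positivity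
    have h2 : q ^ (2*n+1) ≤ 1 := pow_le_one₀ hq0.le hq1.le
    have h3 : q ^ (2*n+1) * h ≤ h := by nlinarith
    rw [abs_of_pos (by linarith)]
    linarith
  have hSumFy : Summable (fun n => q ^ (2*n+1) * (D n ^ 2 + q * s (n+1) + (q ^ (2*n+1) * h + a) * D n)) := by
    apply sum_aux _ (M ^ 2 + q * (M + M * h) + (h + a) * M)
    intro n
    have t1 : |D n ^ 2| = |D n| ^ 2 := abs_pow (D n) 2
    have t2 : |q * s (n+1)| = q * |s (n+1)| := by rw [abs_mul, abs_of_pos hq0]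
    have t3 : |(q ^ (2*n+1) * h + a) * D n| ≤ (h + a) * M := by
      rw [abs_mul]
      exact mul_le_mul (htb n) (hMD n) (abs_nonneg _) (by positivity)
    have t4 := abs_add_le (D n ^ 2 + q * s (n+1)) ((q ^ (2*n+1) * h + a) * D n)
    have t5 := abs_add_le (D n ^ 2) (q * s (n+1))
    have t6 := hsB (n+1)
    have t7 := hMD n
    have t8 : |D n| ^ 2 ≤ M ^ 2 := by nlinarith [abs_nonneg (D n)]
    nlinarith [abs_nonneg (D n)]
  have hSumFb : Summable (fun n => q ^ (2*n+1) * (c ^ 2 + q * sb (n+1) + (q ^ (2*n+1) * h + a) * c)) := by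
    apply sum_aux _ (M ^ 2 + q * (M + M * h) + (h + a) * M)
    intro n
    have t1 : |c ^ 2| = |c| ^ 2 := abs_pow c 2
    have t2 : |q * sb (n+1)| = q * |sb (n+1)| := by rw [abs_mul, abs_of_pos hq0]
    have t3 : |(q ^ (2*n+1) * h + a) * c| ≤ (h + a) * M := by
      rw [abs_mul]
      exact mul_le_mul (htb n) hcM (abs_nonneg _) (by positivity)
    have t4 := abs_add_le (c ^ 2 + q * sb (n+1)) ((q ^ (2*n+1) * h + a) * c)
    have t5 := abs_add_le (c ^ 2) (q * sb (n+1))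
    have t6 := hsbB (n+1)
    have t8 : |c| ^ 2 ≤ M ^ 2 := by nlinarith [abs_nonneg c]
    nlinarith [abs_nonneg c]
  have hSumE : Summable (fun n => q ^ (2*n+1) * (D n - c) ^ 2) := by
    apply sum_aux _ ((2 * M) ^ 2)
    intro n
    have t1 : |(D n - c) ^ 2| = |D n - c| ^ 2 := abs_pow _ 2
    have t2 : |D n - c| ≤ 2 * M := by
      have := abs_sub_abs_le_abs_sub (D n) c
      have h3 : |D n - c| ≤ |D n| + |c| := abs_sub (D n) c
      have := hMD n
      linarith [hcM]
    rw [t1]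
    nlinarith [abs_nonneg (D n - c)]
  -- the telescoping sequence
  set K : ℝ := q * (2 * c + a) / ((1 - q ^ 2) * h) with hK
  set W : ℕ → ℝ := fun n => K * (s n - sb n) + q ^ (2*n+2) / (1 - q ^ 2) * (s n - sb n) with hW
  have hW0 : W 0 = 0 := by
    rw [hW]
    simp [hs0]
  have hWlim : Tendsto W atTop (nhds 0) := by
    have t1 : Tendsto (fun n => K * (s n - sb n)) atTop (nhds (K * 0)) := hlim.const_mul K
    have t2 : Tendsto (fun n : ℕ => q ^ (2*n+2) / (1 - q ^ 2)) atTop (nhds 0) := by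
      have he : ∀ n : ℕ, q ^ (2*n+2) / (1 - q ^ 2) = (q ^ 2) ^ n * (q ^ 2 / (1 - q ^ 2)) := by
        intro n
        rw [pow_add, pow_mul]
        ring
      simp only [he]
      simpa using (tendsto_pow_atTop_nhds_zero_of_lt_one (by positivity) hq2).mul_const (q ^ 2 / (1 - q ^ 2))
    have t3 : Tendsto (fun n : ℕ => q ^ (2*n+2) / (1 - q ^ 2) * (s n - sb n)) atTop (nhds (0 * 0)) :=
      t2.mul hlim
    have := t1.add t3
    simpa using this
  -- pointwise identity
  have hkey : ∀ n : ℕ,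
      q ^ (2*n+1) * (D n ^ 2 + q * s (n+1) + (q ^ (2*n+1) * h + a) * D n)
        - q ^ (2*n+1) * (c ^ 2 + q * sb (n+1) + (q ^ (2*n+1) * h + a) * c)
      = q ^ (2*n+1) * (D n - c) ^ 2 + (W n - W (n+1)) := by
    intro n
    have hs1 : s (n+1) = s n - D n * (q ^ (2*n) * (1 - q ^ 2) * h) := by
      have := hrec n; linarith
    have hs2 : sb (n+1) = sb n - c * (q ^ (2*n) * (1 - q ^ 2) * h) := by
      have := hrecb n; linarith
    rw [hW, hK]
    simp only []
    rw [hs1, hs2]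
    field_simp
    ring
  -- partial sums and limits
  have hdiff : Summable (fun n => q ^ (2*n+1) * (D n ^ 2 + q * s (n+1) + (q ^ (2*n+1) * h + a) * D n)
      - q ^ (2*n+1) * (c ^ 2 + q * sb (n+1) + (q ^ (2*n+1) * h + a) * c)) := hSumFy.sub hSumFb
  have hpartial : ∀ N, ∑ n ∈ Finset.range N,
      (q ^ (2*n+1) * (D n ^ 2 + q * s (n+1) + (q ^ (2*n+1) * h + a) * D n)
        - q ^ (2*n+1) * (c ^ 2 + q * sb (n+1) + (q ^ (2*n+1) * h + a) * c))
      = (∑ n ∈ Finset.range N, q ^ (2*n+1) * (D n - c) ^ 2) + (W 0 - W N) := by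
    intro N
    rw [← Finset.sum_range_sub' W N, ← Finset.sum_add_distrib]
    exact Finset.sum_congr rfl fun n _ => hkey n
  have hT1 := hdiff.hasSum.tendsto_sum_nat
  have hT2 : Tendsto (fun N => ∑ n ∈ Finset.range N,
      (q ^ (2*n+1) * (D n ^ 2 + q * s (n+1) + (q ^ (2*n+1) * h + a) * D n)
        - q ^ (2*n+1) * (c ^ 2 + q * sb (n+1) + (q ^ (2*n+1) * h + a) * c))) atTop
      (nhds ((∑' n : ℕ, q ^ (2*n+1) * (D n - c) ^ 2) + (W 0 - 0))) := by
    have := (hSumE.hasSum.tendsto_sum_nat).add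
      ((tendsto_const_nhds : Filter.Tendsto (fun _ : ℕ => W 0) Filter.atTop (nhds (W 0))).sub hWlim)
    exact Tendsto.congr (fun N => (hpartial N).symm) this
  have heq := tendsto_nhds_unique hT1 hT2
  rw [hW0] at heq
  have hsub := Summable.tsum_sub hSumFy hSumFb
  have hSE : (0:ℝ) ≤ ∑' n : ℕ, q ^ (2*n+1) * (D n - c) ^ 2 :=
    tsum_nonneg fun n => by positivity
  rw [hsub] at heq
  linarith [heq]


theorem stmt19 (q ω : ℝ) (hq : q ∈ Set.Ioo (0:ℝ) 1) (hω : 0 ≤ ω)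
    (a b A B : ℝ) (ha : a = ω / (1 - q)) (hab : a < b) (hAB : A ≠ B) :
    hsAdmissible q ω a b A B (fun t => ((A - B) / (a - b)) * t + (a * B - b * A) / (a - b)) ∧
    ∀ y : ℝ → ℝ, hsAdmissible q ω a b A B y →
      hsFunc q ω a b (fun t => ((A - B) / (a - b)) * t + (a * B - b * A) / (a - b))
        ≤ hsFunc q ω a b y := by
  obtain ⟨hq0, hq1⟩ := hq
  have hq0' : q ≠ 0 := ne_of_gt hq0
  have h1q : (0:ℝ) < 1 - q := by linarith
  have h1q' : (1:ℝ) - q ≠ 0 := ne_of_gt h1q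
  have hq2 : q ^ 2 < 1 := by nlinarith
  have h1q2 : (0:ℝ) < 1 - q ^ 2 := by nlinarith
  have ha0 : 0 ≤ a := by rw [ha]; positivity
  have hb0 : 0 < b := lt_of_le_of_lt ha0 hab
  have hh : (0:ℝ) < b - a := by linarith
  have hab' : a - b ≠ 0 := by intro h'; linarith [hab]
  set c : ℝ := (A - B) / (a - b) with hc
  set d : ℝ := (a * B - b * A) / (a - b) with hd
  -- basic values of the affine candidate
  have hyba : c * a + d = A := by rw [hc, hd]; field_simp; ring
  have hybb : c * b + d = B := by rw [hc, hd]; field_simp; ring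
  have hDyb : ∀ t, hsD q ω (fun s => c * s + d) t = c := fun t => hsD_affine q ω hq0 hq1 c d t
  -- description of points of the q,ω-interval
  have hmemb : ∀ n : ℕ, (q ^ (2*n+1) * (b - a) + a) ∈ hsPts q ω a b := by
    intro n
    apply Set.mem_union_right
    apply Set.mem_iUnion.mpr
    refine ⟨n, ?_⟩
    have : (fun s => q * s + ω)^[2 * n + 1] b = q ^ (2*n+1) * (b - a) + a := by
      rw [hs_iter q ω (by linarith) (2*n+1) b, ha]
    rw [← this]
    right
    rfl
  have hPtsRange : ∀ t ∈ hsPts q ω a b, a ≤ t ∧ t ≤ b := by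
    intro t ht
    rcases ht with ht | ht
    · rw [Set.mem_singleton_iff] at ht
      rw [ht, ← ha]
      exact ⟨le_refl a, le_of_lt hab⟩
    · rw [Set.mem_iUnion] at ht
      obtain ⟨n, hn⟩ := ht
      have hq1n : q ^ (2*n+1) ≤ 1 := pow_le_one₀ hq0.le hq1.le
      have hq0n : 0 < q ^ (2*n+1) := by positivity
      rcases hn with hn | hn
      · rw [hn, hs_iter q ω (by linarith) (2*n+1) a, ← ha]
        constructor <;> nlinarith
      · rw [Set.mem_singleton_iff] at hn
        rw [hn, hs_iter q ω (by linarith) (2*n+1) b, ← ha]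
        constructor <;> nlinarith
  constructor
  · -- admissibility of the affine candidate
    refine ⟨by simpa using hyba, by simpa using hybb, ?_, ?_, ?_⟩
    · refine ⟨|c| * b + |d| + |c|, fun t ht => ?_⟩
      obtain ⟨hta, htb⟩ := hPtsRange t ht
      have htabs : |t| ≤ b := abs_le.mpr ⟨by linarith, htb⟩
      have h1 : |c * t + d| ≤ |c| * |t| + |d| := by
        calc |c * t + d| ≤ |c * t| + |d| := abs_add_le _ _
        _ = |c| * |t| + |d| := by rw [abs_mul]
      have h2 : |c| * |t| ≤ |c| * b := mul_le_mul_of_nonneg_left htabs (abs_nonneg c)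
      constructor
      · simp only []
        have : (0:ℝ) ≤ |c| := abs_nonneg c
        linarith
      · rw [hDyb t]
        have hcb : (0:ℝ) ≤ |c| * b := mul_nonneg (abs_nonneg c) hb0.le
        have : (0:ℝ) ≤ |d| := abs_nonneg d
        linarith
    · rw [← ha]
      exact ((continuous_const.mul continuous_id').add continuous_const).continuousAt
    · have : hsD q ω (fun s => c * s + d) = fun _ => c := funext hDyb
      rw [this]
      exact continuousAt_const
  · -- the minimization property
    intro y hy
    obtain ⟨hyA, hyB, ⟨M, hM⟩, hycont, -⟩ := hy
    have hbase : ∀ g : ℝ → ℝ, hsInt q ω g a = 0 := fun g => by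
      rw [ha]; exact hsInt_base q ω hq0' (ne_of_lt hq1) g
    rw [hsFunc, hsFunc, hbase, hbase, sub_zero, sub_zero,
      hsInt_pt q ω b hq0 hq1, hsInt_pt q ω b hq0 hq1, ← ha]
    have hP : (0:ℝ) < (q⁻¹ - q) * (b - a) := by
      have hinv : q * q⁻¹ = 1 := mul_inv_cancel₀ hq0'
      have : 0 < q⁻¹ - q := by nlinarith
      positivity
    -- continuity of y at a
    have hycont' : ContinuousAt y a := by rw [ha]; exact hycont
    -- the sequences
    have e1 : ∀ n : ℕ, q * (q ^ (2*n+1) * (b - a) + a) + ω = q ^ (2*(n+1)) * (b - a) + a := by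
      intro n
      rw [show (q:ℝ) ^ (2*(n+1)) = q ^ (2*n+1) * q from by ring, ha]
      field_simp
      ring
    have e0 : (q:ℝ) ^ (2*0) * (b - a) + a = b := by norm_num
    have hrec : ∀ n : ℕ, y (q ^ (2*n) * (b - a) + a) - y (q ^ (2*(n+1)) * (b - a) + a)
        = hsD q ω y (q ^ (2*n+1) * (b - a) + a) * (q ^ (2*n) * (1 - q ^ 2) * (b - a)) := by
      intro n
      have hd := hsD_pt q ω hq0 hq1 (b - a) hh y n
      rw [← ha] at hd
      have hX : q ^ (2*n) * (1 - q ^ 2) * (b - a) ≠ 0 := by positivity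
      rw [show (q:ℝ) ^ (2*(n+1)) = q ^ (2*n+2) from by ring, hd, div_mul_cancel₀ _ hX]
    have hrecb : ∀ n : ℕ, (c * (q ^ (2*n) * (b - a) + a) + d) - (c * (q ^ (2*(n+1)) * (b - a) + a) + d)
        = c * (q ^ (2*n) * (1 - q ^ 2) * (b - a)) := by
      intro n
      rw [show (q:ℝ) ^ (2*(n+1)) = q ^ (2*n) * q ^ 2 from by ring]
      ring
    have hs0 : y (q ^ (2*0) * (b - a) + a) = c * (q ^ (2*0) * (b - a) + a) + d := by
      rw [e0, hyB, hybb]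
    have hu : Filter.Tendsto (fun n : ℕ => q ^ (2*n) * (b - a) + a) Filter.atTop (nhds a) := by
      simp only [pow_mul]
      simpa using ((tendsto_pow_atTop_nhds_zero_of_lt_one (by positivity) hq2).mul_const
        (b - a)).add_const a
    have hlim : Filter.Tendsto (fun n : ℕ => y (q ^ (2*n) * (b - a) + a)
        - (c * (q ^ (2*n) * (b - a) + a) + d)) Filter.atTop (nhds 0) := by
      have l1 : Filter.Tendsto (fun n : ℕ => y (q ^ (2*n) * (b - a) + a)) Filter.atTop
          (nhds (y a)) := hycont'.tendsto.comp hu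
      have l2 : Filter.Tendsto (fun n : ℕ => c * (q ^ (2*n) * (b - a) + a) + d) Filter.atTop
          (nhds (c * a + d)) := (hu.const_mul c).add_const d
      have := l1.sub l2
      rw [hyA, hyba, sub_self] at this
      exact this
    -- the bound
    have haPts : a ∈ hsPts q ω a b := Set.mem_union_left _ (by rw [ha]; rfl)
    have hM0 : 0 ≤ M := le_trans (abs_nonneg (y a)) (hM a haPts).1
    set M₁ : ℝ := M + |c| + |B| with hM₁
    have hM₁0 : 0 ≤ M₁ := by positivity
    have hMD : ∀ n : ℕ, |hsD q ω y (q ^ (2*n+1) * (b - a) + a)| ≤ M₁ := by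
      intro n
      have := (hM _ (hmemb n)).2
      have h1 : (0:ℝ) ≤ |c| := abs_nonneg c
      have h2 : (0:ℝ) ≤ |B| := abs_nonneg B
      rw [hM₁]; linarith
    have hB0 : |y (q ^ (2*0) * (b - a) + a)| ≤ M₁ := by
      rw [e0, hyB, hM₁]
      have := abs_nonneg c
      linarith
    have hcM : |c| ≤ M₁ := by
      rw [hM₁]
      have := abs_nonneg B
      linarith
    have hcore := hs_core q (b - a) a c hq0 hq1 hh ha0
      (fun n => y (q ^ (2*n) * (b - a) + a))
      (fun n => c * (q ^ (2*n) * (b - a) + a) + d)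
      (fun n => hsD q ω y (q ^ (2*n+1) * (b - a) + a))
      hrec hrecb hs0 hlim M₁ hMD hM₁0 hB0 hcM
    have hkey : (∑' n : ℕ, q ^ (2*n+1) * (c ^ 2 + q * (c * (q ^ (2*(n+1)) * (b - a) + a) + d)
          + (q ^ (2*n+1) * (b - a) + a) * c))
        ≤ ∑' n : ℕ, q ^ (2*n+1) * ((hsD q ω y (q ^ (2*n+1) * (b - a) + a)) ^ 2
          + q * y (q ^ (2*(n+1)) * (b - a) + a)
          + (q ^ (2*n+1) * (b - a) + a) * hsD q ω y (q ^ (2*n+1) * (b - a) + a)) := hcore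
    have eqb : (∑' n : ℕ, q ^ (2*n+1) * hsLag q ω (fun t => c * t + d) (q ^ (2*n+1) * (b - a) + a))
        = ∑' n : ℕ, q ^ (2*n+1) * (c ^ 2 + q * (c * (q ^ (2*(n+1)) * (b - a) + a) + d)
          + (q ^ (2*n+1) * (b - a) + a) * c) := by
      refine tsum_congr fun n => ?_
      simp only [hsLag, hDyb]
      rw [e1 n]
    have eqy : (∑' n : ℕ, q ^ (2*n+1) * hsLag q ω y (q ^ (2*n+1) * (b - a) + a))
        = ∑' n : ℕ, q ^ (2*n+1) * ((hsD q ω y (q ^ (2*n+1) * (b - a) + a)) ^ 2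
          + q * y (q ^ (2*(n+1)) * (b - a) + a)
          + (q ^ (2*n+1) * (b - a) + a) * hsD q ω y (q ^ (2*n+1) * (b - a) + a)) := by
      refine tsum_congr fun n => ?_
      simp only [hsLag]
      rw [e1 n]
    rw [eqb, eqy]
    exact mul_le_mul_of_nonneg_left hkey hP.le
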